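/- For the uniform distribution P on the boundary of the unit semicircular disc (density 1/(2+π) with respect to arc length), the conditional constrained quantization error of the three-point set {(1,0),(0,1),(-1,0)} is strictly less than that of {(1,0),(0,0),(-1,0)}; explicitly, the distortion error of {(1,0),(0,1),(-1,0)} equals (2/(2+π))(1/3 + π - 2√2). -/

import Mathlib

open Real

/-- Squared Euclidean distance in the plane. -/
noncomputable def sqDist (p q : ℝ × ℝ) : ℝ := (p.1 - q.1)^2 + (p.2 - q.2)^2

/-- Distortion error of a three-point set `{p,q,s}` for the uniform distribution
(density `1/(2+π)` w.r.t. arc length) on the boundary of the unit semicircular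
disc (base segment from `(-1,0)` to `(1,0)` together with the upper unit arc). -/
noncomputable def semiErr3 (p q s : ℝ × ℝ) : ℝ :=
  (1 / (2 + π)) *
    ((∫ t in (-1:ℝ)..1, min (sqDist (t, 0) p) (min (sqDist (t, 0) q) (sqDist (t, 0) s))) +
     ∫ t in (0:ℝ)..π,
        min (sqDist (Real.cos t, Real.sin t) p)
          (min (sqDist (Real.cos t, Real.sin t) q) (sqDist (Real.cos t, Real.sin t) s)))

/- ## Auxiliary antiderivative lemmas -/

private lemma hder_sq (c t : ℝ) : HasDerivAt (fun t => (t-c)^3/3) ((t-c)^2) t := by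
  have h := (((hasDerivAt_id t).sub_const c).pow 3).div_const 3
  refine h.congr_deriv ?_
  simp only [id]; ring

private lemma int_sq (a b c : ℝ) : (∫ t in a..b, (t-c)^2) = ((b-c)^3 - (a-c)^3)/3 := by
  rw [intervalIntegral.integral_eq_sub_of_hasDerivAt (fun t _ => hder_sq c t)
    (Continuous.intervalIntegrable (by fun_prop) _ _)]
  ring

private lemma hder_f1 (t : ℝ) :
    HasDerivAt (fun t => 2*t - 2*Real.sin t) (2 - 2*Real.cos t) t := by
  exact (((hasDerivAt_id t).const_mul 2).sub ((Real.hasDerivAt_sin t).const_mul 2)).congr_deriv (by ring)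

private lemma int_f1 (a b : ℝ) :
    (∫ t in a..b, (2 - 2*Real.cos t)) = (2*b - 2*Real.sin b) - (2*a - 2*Real.sin a) := by
  rw [intervalIntegral.integral_eq_sub_of_hasDerivAt (fun t _ => hder_f1 t)
    (Continuous.intervalIntegrable (by fun_prop) _ _)]

private lemma hder_f2 (t : ℝ) :
    HasDerivAt (fun t => 2*t + 2*Real.cos t) (2 - 2*Real.sin t) t := by
  have h := ((hasDerivAt_id t).const_mul 2).add ((Real.hasDerivAt_cos t).const_mul 2)
  refine h.congr_deriv ?_
  ring

private lemma int_f2 (a b : ℝ) :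
    (∫ t in a..b, (2 - 2*Real.sin t)) = (2*b + 2*Real.cos b) - (2*a + 2*Real.cos a) := by
  rw [intervalIntegral.integral_eq_sub_of_hasDerivAt (fun t _ => hder_f2 t)
    (Continuous.intervalIntegrable (by fun_prop) _ _)]

private lemma hder_f3 (t : ℝ) :
    HasDerivAt (fun t => 2*t + 2*Real.sin t) (2 + 2*Real.cos t) t := by
  exact (((hasDerivAt_id t).const_mul 2).add ((Real.hasDerivAt_sin t).const_mul 2)).congr_deriv (by ring)

private lemma int_f3 (a b : ℝ) :
    (∫ t in a..b, (2 + 2*Real.cos t)) = (2*b + 2*Real.sin b) - (2*a + 2*Real.sin a) := by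
  rw [intervalIntegral.integral_eq_sub_of_hasDerivAt (fun t _ => hder_f3 t)
    (Continuous.intervalIntegrable (by fun_prop) _ _)]

private lemma cos34 : Real.cos (3*π/4) = -(Real.sqrt 2/2) := by
  rw [show (3*π/4) = π - π/4 by ring, Real.cos_pi_sub, Real.cos_pi_div_four]

private lemma sin34 : Real.sin (3*π/4) = Real.sqrt 2/2 := by
  rw [show (3*π/4) = π - π/4 by ring, Real.sin_pi_sub, Real.sin_pi_div_four]

private lemma cos23 : Real.cos (2*π/3) = -(1/2) := by
  rw [show (2*π/3) = π - π/3 by ring, Real.cos_pi_sub, Real.cos_pi_div_three]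

private lemma sin23 : Real.sin (2*π/3) = Real.sqrt 3/2 := by
  rw [show (2*π/3) = π - π/3 by ring, Real.sin_pi_sub, Real.sin_pi_div_three]

/- ## The four integrals -/

private lemma segA :
    (∫ t in (-1:ℝ)..1,
      min (sqDist (t, 0) (1, 0)) (min (sqDist (t, 0) (0, 1)) (sqDist (t, 0) (-1, 0)))) = 2/3 := by
  have hc : Continuous fun t : ℝ =>
      min (sqDist (t, 0) (1, 0)) (min (sqDist (t, 0) (0, 1)) (sqDist (t, 0) (-1, 0))) := by
    simp only [sqDist]; fun_prop
  rw [← intervalIntegral.integral_add_adjacent_intervals (a := (-1:ℝ)) (b := 0) (c := 1)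
    (hc.intervalIntegrable _ _) (hc.intervalIntegrable _ _)]
  have h1 : (∫ t in (-1:ℝ)..0,
      min (sqDist (t, 0) (1, 0)) (min (sqDist (t, 0) (0, 1)) (sqDist (t, 0) (-1, 0))))
      = ∫ t in (-1:ℝ)..0, (t - (-1))^2 := by
    apply intervalIntegral.integral_congr
    rw [Set.uIcc_of_le (by norm_num)]
    intro t ht
    obtain ⟨ht1, ht2⟩ := ht
    simp only []
    have e1 : sqDist (t, 0) (1, 0) = (t-1)^2 := by simp [sqDist]
    have e2 : sqDist (t, 0) (0, 1) = t^2 + 1 := by simp [sqDist]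
    have e3 : sqDist (t, 0) (-1, 0) = (t - (-1))^2 := by simp [sqDist]
    simp only [e1, e2, e3]
    rw [min_eq_right (show (t - (-1))^2 ≤ t^2 + 1 by nlinarith),
      min_eq_right (show (t - (-1))^2 ≤ (t-1)^2 by nlinarith)]
  have h2 : (∫ t in (0:ℝ)..1,
      min (sqDist (t, 0) (1, 0)) (min (sqDist (t, 0) (0, 1)) (sqDist (t, 0) (-1, 0))))
      = ∫ t in (0:ℝ)..1, (t - 1)^2 := by
    apply intervalIntegral.integral_congr
    rw [Set.uIcc_of_le (by norm_num)]
    intro t ht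
    obtain ⟨ht1, ht2⟩ := ht
    simp only []
    have e1 : sqDist (t, 0) (1, 0) = (t-1)^2 := by simp [sqDist]
    have e2 : sqDist (t, 0) (0, 1) = t^2 + 1 := by simp [sqDist]
    have e3 : sqDist (t, 0) (-1, 0) = (t - (-1))^2 := by simp [sqDist]
    simp only [e1, e2, e3]
    rw [min_eq_left (le_min (show (t-1)^2 ≤ t^2 + 1 by nlinarith)
      (show (t-1)^2 ≤ (t - (-1))^2 by nlinarith))]
  rw [h1, h2, int_sq, int_sq]
  norm_num

private lemma arcA :
    (∫ t in (0:ℝ)..π,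
      min (sqDist (Real.cos t, Real.sin t) (1, 0))
        (min (sqDist (Real.cos t, Real.sin t) (0, 1)) (sqDist (Real.cos t, Real.sin t) (-1, 0))))
      = 2*π - 4*Real.sqrt 2 := by
  have pi_pos := Real.pi_pos
  have hc : Continuous fun t : ℝ =>
      min (sqDist (Real.cos t, Real.sin t) (1, 0))
        (min (sqDist (Real.cos t, Real.sin t) (0, 1))
          (sqDist (Real.cos t, Real.sin t) (-1, 0))) := by
    simp only [sqDist]; fun_prop
  rw [← intervalIntegral.integral_add_adjacent_intervals (a := (0:ℝ)) (b := π/4) (c := π)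
    (hc.intervalIntegrable _ _) (hc.intervalIntegrable _ _),
    ← intervalIntegral.integral_add_adjacent_intervals (a := (π/4:ℝ)) (b := 3*π/4) (c := π)
    (hc.intervalIntegrable _ _) (hc.intervalIntegrable _ _)]
  have key : ∀ t : ℝ,
      min (sqDist (Real.cos t, Real.sin t) (1, 0))
        (min (sqDist (Real.cos t, Real.sin t) (0, 1)) (sqDist (Real.cos t, Real.sin t) (-1, 0)))
      = min (2 - 2*Real.cos t) (min (2 - 2*Real.sin t) (2 + 2*Real.cos t)) := by
    intro t
    have e1 : sqDist (Real.cos t, Real.sin t) (1, 0) = 2 - 2*Real.cos t := by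
      simp only [sqDist]; linear_combination Real.sin_sq_add_cos_sq t
    have e2 : sqDist (Real.cos t, Real.sin t) (0, 1) = 2 - 2*Real.sin t := by
      simp only [sqDist]; linear_combination Real.sin_sq_add_cos_sq t
    have e3 : sqDist (Real.cos t, Real.sin t) (-1, 0) = 2 + 2*Real.cos t := by
      simp only [sqDist]; linear_combination Real.sin_sq_add_cos_sq t
    rw [e1, e2, e3]
  have hs2 : (0:ℝ) ≤ Real.sqrt 2 := Real.sqrt_nonneg 2
  have h1 : (∫ t in (0:ℝ)..(π/4),
      min (sqDist (Real.cos t, Real.sin t) (1, 0))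
        (min (sqDist (Real.cos t, Real.sin t) (0, 1)) (sqDist (Real.cos t, Real.sin t) (-1, 0))))
      = ∫ t in (0:ℝ)..(π/4), (2 - 2*Real.cos t) := by
    apply intervalIntegral.integral_congr
    rw [Set.uIcc_of_le (by linarith)]
    intro t ht
    obtain ⟨ht1, ht2⟩ := ht
    simp only []
    rw [key]
    have hc1 : Real.cos (π/4) ≤ Real.cos t :=
      Real.cos_le_cos_of_nonneg_of_le_pi ht1 (by linarith) ht2
    have hs1 : Real.sin t ≤ Real.cos (π/4) := by
      rw [← Real.cos_pi_div_two_sub]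
      exact Real.cos_le_cos_of_nonneg_of_le_pi (by linarith) (by linarith) (by linarith)
    have hv : Real.cos (π/4) = Real.sqrt 2/2 := Real.cos_pi_div_four
    rw [min_eq_left (le_min (show 2 - 2*Real.cos t ≤ 2 - 2*Real.sin t by linarith)
      (show 2 - 2*Real.cos t ≤ 2 + 2*Real.cos t by linarith))]
  have h2 : (∫ t in (π/4:ℝ)..(3*π/4),
      min (sqDist (Real.cos t, Real.sin t) (1, 0))
        (min (sqDist (Real.cos t, Real.sin t) (0, 1)) (sqDist (Real.cos t, Real.sin t) (-1, 0))))
      = ∫ t in (π/4:ℝ)..(3*π/4), (2 - 2*Real.sin t) := by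
    apply intervalIntegral.integral_congr
    rw [Set.uIcc_of_le (by linarith)]
    intro t ht
    obtain ⟨ht1, ht2⟩ := ht
    simp only []
    rw [key]
    have habs : Real.sin t = Real.cos |π/2 - t| := by
      rw [Real.cos_abs, Real.cos_pi_div_two_sub]
    have hsin : Real.cos (π/4) ≤ Real.sin t := by
      rw [habs]
      exact Real.cos_le_cos_of_nonneg_of_le_pi (abs_nonneg _) (by linarith)
        (abs_le.mpr ⟨by linarith, by linarith⟩)
    have hcu : Real.cos t ≤ Real.cos (π/4) :=
      Real.cos_le_cos_of_nonneg_of_le_pi (by linarith) (by linarith) ht1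
    have hcl : Real.cos (3*π/4) ≤ Real.cos t :=
      Real.cos_le_cos_of_nonneg_of_le_pi (by linarith) (by linarith) ht2
    rw [cos34] at hcl
    have hv : Real.cos (π/4) = Real.sqrt 2/2 := Real.cos_pi_div_four
    rw [min_eq_left (show 2 - 2*Real.sin t ≤ 2 + 2*Real.cos t by linarith),
      min_eq_right (show 2 - 2*Real.sin t ≤ 2 - 2*Real.cos t by linarith)]
  have h3 : (∫ t in (3*π/4:ℝ)..π,
      min (sqDist (Real.cos t, Real.sin t) (1, 0))
        (min (sqDist (Real.cos t, Real.sin t) (0, 1)) (sqDist (Real.cos t, Real.sin t) (-1, 0))))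
      = ∫ t in (3*π/4:ℝ)..π, (2 + 2*Real.cos t) := by
    apply intervalIntegral.integral_congr
    rw [Set.uIcc_of_le (by linarith)]
    intro t ht
    obtain ⟨ht1, ht2⟩ := ht
    simp only []
    rw [key]
    have hcl : Real.cos t ≤ Real.cos (3*π/4) :=
      Real.cos_le_cos_of_nonneg_of_le_pi (by linarith) ht2 ht1
    rw [cos34] at hcl
    have habs : Real.sin t = Real.cos |π/2 - t| := by
      rw [Real.cos_abs, Real.cos_pi_div_two_sub]
    have hsin : Real.sin t ≤ Real.cos (π/4) := by
      rw [habs]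
      exact Real.cos_le_cos_of_nonneg_of_le_pi (by linarith)
        (abs_le.mpr ⟨by linarith, by linarith⟩) (le_abs.mpr (Or.inr (by linarith)))
    have hv : Real.cos (π/4) = Real.sqrt 2/2 := Real.cos_pi_div_four
    rw [min_eq_right (show 2 + 2*Real.cos t ≤ 2 - 2*Real.sin t by linarith),
      min_eq_right (show 2 + 2*Real.cos t ≤ 2 - 2*Real.cos t by linarith)]
  rw [h1, h2, h3, int_f1, int_f2, int_f3, Real.sin_pi_div_four, Real.cos_pi_div_four,
    sin34, cos34, Real.sin_pi, Real.sin_zero]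
  ring

private lemma segB :
    (∫ t in (-1:ℝ)..1,
      min (sqDist (t, 0) (1, 0)) (min (sqDist (t, 0) (0, 0)) (sqDist (t, 0) (-1, 0)))) = 1/6 := by
  have hc : Continuous fun t : ℝ =>
      min (sqDist (t, 0) (1, 0)) (min (sqDist (t, 0) (0, 0)) (sqDist (t, 0) (-1, 0))) := by
    simp only [sqDist]; fun_prop
  rw [← intervalIntegral.integral_add_adjacent_intervals (a := (-1:ℝ)) (b := -(1/2)) (c := 1)
    (hc.intervalIntegrable _ _) (hc.intervalIntegrable _ _),
    ← intervalIntegral.integral_add_adjacent_intervals (a := (-(1/2):ℝ)) (b := 1/2) (c := 1)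
    (hc.intervalIntegrable _ _) (hc.intervalIntegrable _ _)]
  have key : ∀ t : ℝ,
      min (sqDist (t, 0) (1, 0)) (min (sqDist (t, 0) (0, 0)) (sqDist (t, 0) (-1, 0)))
      = min ((t-1)^2) (min ((t-0)^2) ((t-(-1))^2)) := by
    intro t
    have e1 : sqDist (t, 0) (1, 0) = (t-1)^2 := by simp [sqDist]
    have e2 : sqDist (t, 0) (0, 0) = (t-0)^2 := by simp [sqDist]
    have e3 : sqDist (t, 0) (-1, 0) = (t-(-1))^2 := by simp [sqDist]
    rw [e1, e2, e3]
  have h1 : (∫ t in (-1:ℝ)..(-(1/2)),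
      min (sqDist (t, 0) (1, 0)) (min (sqDist (t, 0) (0, 0)) (sqDist (t, 0) (-1, 0))))
      = ∫ t in (-1:ℝ)..(-(1/2)), (t-(-1))^2 := by
    apply intervalIntegral.integral_congr
    rw [Set.uIcc_of_le (by norm_num)]
    intro t ht
    obtain ⟨ht1, ht2⟩ := ht
    simp only []
    rw [key, min_eq_right (show (t-(-1))^2 ≤ (t-0)^2 by nlinarith),
      min_eq_right (show (t-(-1))^2 ≤ (t-1)^2 by nlinarith)]
  have h2 : (∫ t in (-(1/2):ℝ)..(1/2),
      min (sqDist (t, 0) (1, 0)) (min (sqDist (t, 0) (0, 0)) (sqDist (t, 0) (-1, 0))))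
      = ∫ t in (-(1/2):ℝ)..(1/2), (t-0)^2 := by
    apply intervalIntegral.integral_congr
    rw [Set.uIcc_of_le (by norm_num)]
    intro t ht
    obtain ⟨ht1, ht2⟩ := ht
    simp only []
    rw [key, min_eq_left (show (t-0)^2 ≤ (t-(-1))^2 by nlinarith),
      min_eq_right (show (t-0)^2 ≤ (t-1)^2 by nlinarith)]
  have h3 : (∫ t in ((1/2):ℝ)..1,
      min (sqDist (t, 0) (1, 0)) (min (sqDist (t, 0) (0, 0)) (sqDist (t, 0) (-1, 0))))
      = ∫ t in ((1/2):ℝ)..1, (t-1)^2 := by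
    apply intervalIntegral.integral_congr
    rw [Set.uIcc_of_le (by norm_num)]
    intro t ht
    obtain ⟨ht1, ht2⟩ := ht
    simp only []
    rw [key, min_eq_left (le_min (show (t-1)^2 ≤ (t-0)^2 by nlinarith)
      (show (t-1)^2 ≤ (t-(-1))^2 by nlinarith))]
  rw [h1, h2, h3, int_sq, int_sq, int_sq]
  norm_num

private lemma arcB :
    (∫ t in (0:ℝ)..π,
      min (sqDist (Real.cos t, Real.sin t) (1, 0))
        (min (sqDist (Real.cos t, Real.sin t) (0, 0)) (sqDist (Real.cos t, Real.sin t) (-1, 0))))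
      = 5*π/3 - 2*Real.sqrt 3 := by
  have pi_pos := Real.pi_pos
  have hc : Continuous fun t : ℝ =>
      min (sqDist (Real.cos t, Real.sin t) (1, 0))
        (min (sqDist (Real.cos t, Real.sin t) (0, 0))
          (sqDist (Real.cos t, Real.sin t) (-1, 0))) := by
    simp only [sqDist]; fun_prop
  rw [← intervalIntegral.integral_add_adjacent_intervals (a := (0:ℝ)) (b := π/3) (c := π)
    (hc.intervalIntegrable _ _) (hc.intervalIntegrable _ _),
    ← intervalIntegral.integral_add_adjacent_intervals (a := (π/3:ℝ)) (b := 2*π/3) (c := π)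
    (hc.intervalIntegrable _ _) (hc.intervalIntegrable _ _)]
  have key : ∀ t : ℝ,
      min (sqDist (Real.cos t, Real.sin t) (1, 0))
        (min (sqDist (Real.cos t, Real.sin t) (0, 0)) (sqDist (Real.cos t, Real.sin t) (-1, 0)))
      = min (2 - 2*Real.cos t) (min 1 (2 + 2*Real.cos t)) := by
    intro t
    have e1 : sqDist (Real.cos t, Real.sin t) (1, 0) = 2 - 2*Real.cos t := by
      simp only [sqDist]; linear_combination Real.sin_sq_add_cos_sq t
    have e2 : sqDist (Real.cos t, Real.sin t) (0, 0) = 1 := by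
      simp only [sqDist]; linear_combination Real.sin_sq_add_cos_sq t
    have e3 : sqDist (Real.cos t, Real.sin t) (-1, 0) = 2 + 2*Real.cos t := by
      simp only [sqDist]; linear_combination Real.sin_sq_add_cos_sq t
    rw [e1, e2, e3]
  have h1 : (∫ t in (0:ℝ)..(π/3),
      min (sqDist (Real.cos t, Real.sin t) (1, 0))
        (min (sqDist (Real.cos t, Real.sin t) (0, 0)) (sqDist (Real.cos t, Real.sin t) (-1, 0))))
      = ∫ t in (0:ℝ)..(π/3), (2 - 2*Real.cos t) := by
    apply intervalIntegral.integral_congr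
    rw [Set.uIcc_of_le (by linarith)]
    intro t ht
    obtain ⟨ht1, ht2⟩ := ht
    simp only []
    rw [key]
    have hc1 : Real.cos (π/3) ≤ Real.cos t :=
      Real.cos_le_cos_of_nonneg_of_le_pi ht1 (by linarith) ht2
    rw [Real.cos_pi_div_three] at hc1
    rw [min_eq_left (le_min (show 2 - 2*Real.cos t ≤ (1:ℝ) by linarith)
      (show 2 - 2*Real.cos t ≤ 2 + 2*Real.cos t by linarith))]
  have h2 : (∫ t in (π/3:ℝ)..(2*π/3),
      min (sqDist (Real.cos t, Real.sin t) (1, 0))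
        (min (sqDist (Real.cos t, Real.sin t) (0, 0)) (sqDist (Real.cos t, Real.sin t) (-1, 0))))
      = ∫ t in (π/3:ℝ)..(2*π/3), (1:ℝ) := by
    apply intervalIntegral.integral_congr
    rw [Set.uIcc_of_le (by linarith)]
    intro t ht
    obtain ⟨ht1, ht2⟩ := ht
    simp only []
    rw [key]
    have hcu : Real.cos t ≤ Real.cos (π/3) :=
      Real.cos_le_cos_of_nonneg_of_le_pi (by linarith) (by linarith) ht1
    have hcl : Real.cos (2*π/3) ≤ Real.cos t :=
      Real.cos_le_cos_of_nonneg_of_le_pi (by linarith) (by linarith) ht2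
    rw [Real.cos_pi_div_three] at hcu
    rw [cos23] at hcl
    rw [min_eq_left (show (1:ℝ) ≤ 2 + 2*Real.cos t by linarith),
      min_eq_right (show (1:ℝ) ≤ 2 - 2*Real.cos t by linarith)]
  have h3 : (∫ t in (2*π/3:ℝ)..π,
      min (sqDist (Real.cos t, Real.sin t) (1, 0))
        (min (sqDist (Real.cos t, Real.sin t) (0, 0)) (sqDist (Real.cos t, Real.sin t) (-1, 0))))
      = ∫ t in (2*π/3:ℝ)..π, (2 + 2*Real.cos t) := by
    apply intervalIntegral.integral_congr
    rw [Set.uIcc_of_le (by linarith)]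
    intro t ht
    obtain ⟨ht1, ht2⟩ := ht
    simp only []
    rw [key]
    have hcl : Real.cos t ≤ Real.cos (2*π/3) :=
      Real.cos_le_cos_of_nonneg_of_le_pi (by linarith) ht2 ht1
    rw [cos23] at hcl
    rw [min_eq_right (show 2 + 2*Real.cos t ≤ (1:ℝ) by linarith),
      min_eq_right (show 2 + 2*Real.cos t ≤ 2 - 2*Real.cos t by linarith)]
  rw [h1, h2, h3, int_f1, int_f3, intervalIntegral.integral_const, smul_eq_mul,
    Real.sin_pi_div_three, sin23, Real.sin_pi, Real.sin_zero]
  ring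

/-- The three-point set `{(1,0),(0,1),(-1,0)}` has strictly smaller distortion
error than `{(1,0),(0,0),(-1,0)}`, and its error equals `(2/(2+π))(1/3+π-2√2)`. -/
theorem stmt5 :
    semiErr3 (1, 0) (0, 1) (-1, 0) = (2 / (2 + π)) * (1/3 + π - 2 * Real.sqrt 2) ∧
    semiErr3 (1, 0) (0, 1) (-1, 0) < semiErr3 (1, 0) (0, 0) (-1, 0) := by
  have hL : semiErr3 (1, 0) (0, 1) (-1, 0) = (1 / (2 + π)) * (2/3 + (2*π - 4*Real.sqrt 2)) := by
    rw [semiErr3, segA, arcA]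
  have hR : semiErr3 (1, 0) (0, 0) (-1, 0) = (1 / (2 + π)) * (1/6 + (5*π/3 - 2*Real.sqrt 3)) := by
    rw [semiErr3, segB, arcB]
  have h2 : (1.414:ℝ) ≤ Real.sqrt 2 := by
    nlinarith [Real.sq_sqrt (show (0:ℝ) ≤ 2 by norm_num), Real.sqrt_nonneg 2]
  have h3 : Real.sqrt 3 ≤ 1.7321 := by
    nlinarith [Real.sq_sqrt (show (0:ℝ) ≤ 3 by norm_num), Real.sqrt_nonneg 3]
  have hpi := Real.pi_lt_d2
  have hpos : (0:ℝ) < 1 / (2 + π) := by positivity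
  constructor
  · rw [hL]; ring
  · rw [hL, hR]
    exact mul_lt_mul_of_pos_left (by linarith) hpos
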